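/- Let Σ̃ be a d×d real symmetric positive semidefinite matrix whose smallest eigenvalue satisfies λ_min(Σ̃) ≥ ℓ for some ℓ > 0, let Σ̂_υ be a d×d real symmetric positive definite matrix with operator norm s = ‖Σ̂_υ‖, let λ ≥ 0, and let G be a d×d real symmetric matrix with ‖G‖ ≤ (ℓ + λ/s)/2. Then the matrices Σ̃ + λΣ̂_υ^{-1} and Σ̃ + λΣ̂_υ^{-1} + G are both invertible, and ‖(Σ̃ + λΣ̂_υ^{-1} + G)^{-1} − (Σ̃ + λΣ̂_υ^{-1})^{-1}‖ ≤ 2‖G‖ / (ℓ² + λ²/s²). (Deterministic inverse-error bound of Theorem 3.4, part 2.) -/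

import Mathlib

open Matrix
open scoped RealInnerProductSpace

/-- Operator norm of a square real matrix induced by the Euclidean norm. -/
noncomputable def matOpNorm {d : ℕ} (A : Matrix (Fin d) (Fin d) ℝ) : ℝ :=
  ‖Matrix.toEuclideanCLM (𝕜 := ℝ) A‖

/-- Euclidean norm of a vector in ℝ^d. -/
noncomputable def vnorm {d : ℕ} (v : Fin d → ℝ) : ℝ :=
  Real.sqrt (∑ i, (v i) ^ 2)

/-- Frobenius norm of a square real matrix. -/
noncomputable def frobNorm {d : ℕ} (A : Matrix (Fin d) (Fin d) ℝ) : ℝ :=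
  Real.sqrt (∑ i, ∑ j, (A i j) ^ 2)

/-- Inverse of the (unique symmetric positive definite) square root of a
positive definite matrix: `M^{-1/2}`. -/
noncomputable def pdInvSqrt {d : ℕ} {M : Matrix (Fin d) (Fin d) ℝ} (hM : M.PosDef) :
    Matrix (Fin d) (Fin d) ℝ :=
  (hM.posSemidef.isHermitian.eigenvectorUnitary.1 *
      diagonal ((↑) ∘ Real.sqrt ∘ hM.posSemidef.isHermitian.eigenvalues) *
      (star hM.posSemidef.isHermitian.eigenvectorUnitary : Matrix (Fin d) (Fin d) ℝ))⁻¹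

/-- Smallest eigenvalue of a real symmetric matrix, via the Rayleigh quotient
(infimum of `vᵀ A v` over Euclidean-unit vectors `v`). -/
noncomputable def lamMin {d : ℕ} (A : Matrix (Fin d) (Fin d) ℝ) : ℝ :=
  ⨅ v : {v : Fin d → ℝ // ∑ i, (v i) ^ 2 = 1}, dotProduct v.1 (A *ᵥ v.1)

/-- Largest eigenvalue of a real symmetric matrix, via the Rayleigh quotient
(supremum of `vᵀ A v` over Euclidean-unit vectors `v`). -/
noncomputable def lamMax {d : ℕ} (A : Matrix (Fin d) (Fin d) ℝ) : ℝ :=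
  ⨆ v : {v : Fin d → ℝ // ∑ i, (v i) ^ 2 = 1}, dotProduct v.1 (A *ᵥ v.1)

/-- Loewner order on real symmetric matrices: `A ⪯ B` iff `B - A` is positive
semidefinite. -/
def loewnerLE {d : ℕ} (A B : Matrix (Fin d) (Fin d) ℝ) : Prop :=
  (B - A).PosSemidef

section Aux

variable {d : ℕ}
local notation "T" => Matrix.toEuclideanCLM (𝕜 := ℝ) (n := Fin d)

lemma inner_toE (M : Matrix (Fin d) (Fin d) ℝ) (x : EuclideanSpace ℝ (Fin d)) :
    ⟪x, T M x⟫ = dotProduct (WithLp.equiv 2 _ x) (M *ᵥ (WithLp.equiv 2 _ x)) := by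
  simp [PiLp.inner_apply, Matrix.ofLp_toEuclideanCLM, dotProduct, RCLike.inner_apply]
  exact Finset.sum_congr rfl fun i _ => mul_comm _ _

lemma matOpNorm_mul_le (A B : Matrix (Fin d) (Fin d) ℝ) :
    matOpNorm (A * B) ≤ matOpNorm A * matOpNorm B := by
  unfold matOpNorm; rw [_root_.map_mul]; exact norm_mul_le _ _

lemma matOpNorm_neg (A : Matrix (Fin d) (Fin d) ℝ) : matOpNorm (-A) = matOpNorm A := by
  unfold matOpNorm; rw [map_neg, norm_neg]

lemma matOpNorm_nonneg (A : Matrix (Fin d) (Fin d) ℝ) : 0 ≤ matOpNorm A := norm_nonneg _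

lemma quad_abs_le (M : Matrix (Fin d) (Fin d) ℝ) (x : EuclideanSpace ℝ (Fin d)) :
    |⟪x, T M x⟫| ≤ matOpNorm M * ‖x‖ ^ 2 := by
  calc |⟪x, T M x⟫| ≤ ‖x‖ * ‖T M x‖ := abs_real_inner_le_norm _ _
    _ ≤ ‖x‖ * (‖T M‖ * ‖x‖) := by
        gcongr; exact (T M).le_opNorm x
    _ = matOpNorm M * ‖x‖ ^ 2 := by unfold matOpNorm; ring

lemma coercive (M : Matrix (Fin d) (Fin d) ℝ) (hM : M.IsHermitian) (c : ℝ) (hc : 0 < c)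
    (h : ∀ x : EuclideanSpace ℝ (Fin d), c * ‖x‖ ^ 2 ≤ ⟪x, T M x⟫) :
    IsUnit M ∧ matOpNorm M⁻¹ ≤ 1 / c := by
  have hpd : M.PosDef := by
    refine Matrix.PosDef.of_dotProduct_mulVec_pos hM fun v hv => ?_
    set x : EuclideanSpace ℝ (Fin d) := (WithLp.equiv 2 _).symm v with hxdef
    have hx := h x
    rw [inner_toE] at hx
    have hxne : x ≠ 0 := by
      simpa [hxdef] using hv
    have hxn : 0 < ‖x‖ := norm_pos_iff.mpr hxne
    have : 0 < c * ‖x‖ ^ 2 := by positivity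
    simpa [star_trivial, hxdef] using lt_of_lt_of_le this hx
  have hdet : IsUnit M.det := (Matrix.isUnit_iff_isUnit_det _).1 hpd.isUnit
  refine ⟨hpd.isUnit, ?_⟩
  have hone : T M * T M⁻¹ = 1 := by
    rw [← _root_.map_mul, Matrix.mul_nonsing_inv _ hdet, _root_.map_one]
  refine ContinuousLinearMap.opNorm_le_bound _ (by positivity) fun v => ?_
  set w := T M⁻¹ v with hw
  have hMw : T M w = v := by
    have : (T M * T M⁻¹) v = (1 : EuclideanSpace ℝ (Fin d) →L[ℝ] EuclideanSpace ℝ (Fin d)) v := by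
      rw [hone]
    simpa using this
  have h1 : c * ‖w‖ ^ 2 ≤ ⟪w, v⟫ := by
    have := h w; rwa [hMw] at this
  have h2 : ⟪w, v⟫ ≤ ‖w‖ * ‖v‖ := real_inner_le_norm _ _
  rcases eq_or_lt_of_le (norm_nonneg w) with h0 | h0
  · rw [← h0]; positivity
  · have : c * ‖w‖ ≤ ‖v‖ := by
      have := le_trans h1 h2
      nlinarith
    rw [one_div]
    rw [mul_comm, ← le_div_iff₀ hc] at this
    calc ‖w‖ ≤ ‖v‖ / c := this
      _ = c⁻¹ * ‖v‖ := by ring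

lemma quad_lamMin (St : Matrix (Fin d) (Fin d) ℝ) (hSt : St.PosSemidef) (l : ℝ)
    (hlmin : l ≤ lamMin St) (x : EuclideanSpace ℝ (Fin d)) :
    l * ‖x‖ ^ 2 ≤ ⟪x, T St x⟫ := by
  rcases eq_or_ne x 0 with rfl | hx
  · simp
  · have hxn : 0 < ‖x‖ := norm_pos_iff.mpr hx
    set u : EuclideanSpace ℝ (Fin d) := ‖x‖⁻¹ • x with hu
    have hun : ‖u‖ = 1 := by
      rw [hu, norm_smul, norm_inv, norm_norm, inv_mul_cancel₀ hxn.ne']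
    have hsum : ∑ i, ((WithLp.equiv 2 _) u i) ^ 2 = 1 := by
      have h1 : ⟪u, u⟫ = ∑ i, ((WithLp.equiv 2 _) u i) ^ 2 := by
        simp only [PiLp.inner_apply, RCLike.inner_apply, conj_trivial, sq]
        rfl
      rw [← h1, real_inner_self_eq_norm_sq, hun, one_pow]
    have hb : BddBelow (Set.range fun v : {v : Fin d → ℝ // ∑ i, (v i) ^ 2 = 1} =>
        dotProduct v.1 (St *ᵥ v.1)) := by
      refine ⟨0, fun y hy => ?_⟩
      obtain ⟨v, rfl⟩ := hy
      simpa [star_trivial] using hSt.dotProduct_mulVec_nonneg v.1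
    have hlu : l ≤ ⟪u, T St u⟫ := by
      rw [inner_toE]
      exact le_trans hlmin (ciInf_le hb ⟨(WithLp.equiv 2 _) u, hsum⟩)
    have hxu : x = ‖x‖ • u := by
      rw [hu, smul_smul, mul_inv_cancel₀ hxn.ne', one_smul]
    have hqx : ⟪x, T St x⟫ = ‖x‖ ^ 2 * ⟪u, T St u⟫ := by
      conv_lhs => rw [hxu]
      rw [_root_.map_smul, real_inner_smul_left, real_inner_smul_right]
      ring
    rw [hqx]
    have := mul_le_mul_of_nonneg_left hlu (le_of_lt (by positivity : (0:ℝ) < ‖x‖ ^ 2))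
    linarith

set_option maxHeartbeats 1000000 in
lemma quad_inv (Sv : Matrix (Fin d) (Fin d) ℝ) (hSv : Sv.PosDef)
    (x : EuclideanSpace ℝ (Fin d)) :
    ‖x‖ ^ 2 ≤ matOpNorm Sv * ⟪x, T Sv⁻¹ x⟫ := by
  obtain ⟨R, hRh, hRR⟩ : ∃ R : Matrix (Fin d) (Fin d) ℝ, R.IsHermitian ∧ R * R = Sv :=
    open scoped MatrixOrder in
    ⟨CFC.sqrt Sv, (CFC.sqrt_nonneg Sv).posSemidef.isHermitian,
      CFC.sqrt_mul_sqrt_self Sv hSv.posSemidef.nonneg⟩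
  have hRdet : IsUnit R.det := by
    rw [isUnit_iff_ne_zero]
    intro h0
    have : Sv.det = 0 := by rw [← hRR, det_mul, h0, mul_zero]
    exact hSv.det_pos.ne' this
  have hinv : Sv⁻¹ = R⁻¹ * R⁻¹ := by rw [← hRR, Matrix.mul_inv_rev]
  have hRih : (R⁻¹).IsHermitian := hRh.inv
  have hadj : ContinuousLinearMap.adjoint (T R⁻¹) = T R⁻¹ := by
    rw [← ContinuousLinearMap.star_eq_adjoint, ← map_star]
    exact congrArg _ hRih
  have key : ⟪x, T Sv⁻¹ x⟫ = ‖T R⁻¹ x‖ ^ 2 := by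
    rw [hinv, _root_.map_mul]
    calc ⟪x, (T R⁻¹ * T R⁻¹) x⟫ = ⟪x, T R⁻¹ (T R⁻¹ x)⟫ := rfl
      _ = ⟪ContinuousLinearMap.adjoint (T R⁻¹) x, T R⁻¹ x⟫ :=
          (ContinuousLinearMap.adjoint_inner_left _ _ _).symm
      _ = ⟪T R⁻¹ x, T R⁻¹ x⟫ := by rw [hadj]
      _ = ‖T R⁻¹ x‖ ^ 2 := real_inner_self_eq_norm_sq _
  have hxx : T R (T R⁻¹ x) = x := by
    have hone : T R * T R⁻¹ = 1 := by
      rw [← _root_.map_mul, Matrix.mul_nonsing_inv _ hRdet, _root_.map_one]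
    have : (T R * T R⁻¹) x = (1 : EuclideanSpace ℝ (Fin d) →L[ℝ]
        EuclideanSpace ℝ (Fin d)) x := by rw [hone]
    simpa using this
  have hnormR : ‖T R‖ ^ 2 = matOpNorm Sv := by
    have h1 : ‖star (T R) * T R‖ = ‖T R‖ * ‖T R‖ := CStarRing.norm_star_mul_self (x := T R)
    have h2 : star (T R) = T R := by
      rw [← map_star]
      exact congrArg _ hRh
    rw [h2, ← _root_.map_mul, hRR] at h1
    rw [sq]
    exact h1.symm
  calc ‖x‖ ^ 2 = ‖T R (T R⁻¹ x)‖ ^ 2 := by rw [hxx]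
    _ ≤ (‖T R‖ * ‖T R⁻¹ x‖) ^ 2 := by
        have := (T R).le_opNorm (T R⁻¹ x)
        exact pow_le_pow_left₀ (norm_nonneg _) this 2
    _ = ‖T R‖ ^ 2 * ‖T R⁻¹ x‖ ^ 2 := by ring
    _ = matOpNorm Sv * ⟪x, T Sv⁻¹ x⟫ := by rw [hnormR, key]

lemma arith_final (l lam s g : ℝ) (hl : 0 < l) (hlam : 0 ≤ lam) (hs : 0 < s) (hg0 : 0 ≤ g)
    (hGnorm : g ≤ (l + lam / s) / 2) :
    1 / (l + lam / s - g) * (g * (1 / (l + lam / s))) ≤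
      2 * g / (l ^ 2 + lam ^ 2 / s ^ 2) := by
  have hm : 0 < l + lam / s := by positivity
  have hmg : 0 < l + lam / s - g := by linarith
  have hden : 0 < l ^ 2 + lam ^ 2 / s ^ 2 := by positivity
  have h4 : l ^ 2 + lam ^ 2 / s ^ 2 ≤ (l + lam / s) ^ 2 := by
    have hds : lam ^ 2 / s ^ 2 = (lam / s) ^ 2 := by rw [div_pow]
    rw [hds]
    nlinarith [mul_nonneg hl.le (div_nonneg hlam hs.le)]
  have hrw : 1 / (l + lam / s - g) * (g * (1 / (l + lam / s))) =
      g / ((l + lam / s - g) * (l + lam / s)) := by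
    field_simp
  rw [hrw, div_le_div_iff₀ (by positivity) hden]
  have e5 : (l + lam / s) * (l + lam / s) ≤ 2 * ((l + lam / s - g) * (l + lam / s)) := by
    nlinarith [mul_le_mul_of_nonneg_left hGnorm hm.le]
  nlinarith [mul_le_mul_of_nonneg_left h4 hg0, mul_le_mul_of_nonneg_left e5 hg0]

end Aux

/-- deterministic inverse-error bound, Theorem 3.4 part 2:
if `λ_min(Σ̃) ≥ ℓ > 0` and `‖G‖ ≤ (ℓ + λ/‖Σ̂_υ‖)/2` then
`Σ̃ + λΣ̂_υ^{-1}` and `Σ̃ + λΣ̂_υ^{-1} + G` are invertible and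
`‖(Σ̃ + λΣ̂_υ^{-1} + G)^{-1} − (Σ̃ + λΣ̂_υ^{-1})^{-1}‖ ≤ 2‖G‖/(ℓ² + λ²/‖Σ̂_υ‖²)`. -/
theorem stmt3 {d : ℕ} (St Sv G : Matrix (Fin d) (Fin d) ℝ)
    (hSt : St.PosSemidef) (hSv : Sv.PosDef) (lam : ℝ) (hlam : 0 ≤ lam)
    (l : ℝ) (hl : 0 < l) (hlmin : l ≤ lamMin St)
    (hG : G.IsHermitian) (hGnorm : matOpNorm G ≤ (l + lam / matOpNorm Sv) / 2) :
    IsUnit (St + lam • Sv⁻¹) ∧ IsUnit (St + lam • Sv⁻¹ + G) ∧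
      matOpNorm ((St + lam • Sv⁻¹ + G)⁻¹ - (St + lam • Sv⁻¹)⁻¹) ≤
        2 * matOpNorm G / (l ^ 2 + lam ^ 2 / matOpNorm Sv ^ 2) := by
  rcases Nat.eq_zero_or_pos d with hd | hd
  · subst hd
    have hz : ∀ M : Matrix (Fin 0) (Fin 0) ℝ, matOpNorm M = 0 := fun M => by
      have h0 : Matrix.toEuclideanCLM (𝕜 := ℝ) M = 0 := Subsingleton.elim _ _
      rw [matOpNorm, h0, norm_zero]
    refine ⟨isUnit_of_subsingleton _, isUnit_of_subsingleton _, ?_⟩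
    rw [hz, hz]
    simp
  -- main case
  have hs : 0 < matOpNorm Sv := by
    have hSvne : Sv ≠ 0 := by
      intro h0
      have : Sv.det = 0 := by
        rw [h0]
        haveI : Nonempty (Fin d) := ⟨⟨0, hd⟩⟩
        exact Matrix.det_zero
      exact hSv.det_pos.ne' this
    have : Matrix.toEuclideanCLM (𝕜 := ℝ) Sv ≠ 0 := by
      intro h0
      apply hSvne
      have h1 := congrArg (Matrix.toEuclideanCLM (𝕜 := ℝ) (n := Fin d)).symm h0
      simpa using h1
    exact norm_pos_iff.mpr this
  obtain ⟨s, hsdef⟩ : ∃ t : ℝ, matOpNorm Sv = t := ⟨_, rfl⟩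
  rw [hsdef] at hs hGnorm ⊢
  obtain ⟨g, hgdef⟩ : ∃ t : ℝ, matOpNorm G = t := ⟨_, rfl⟩
  rw [hgdef] at hGnorm ⊢
  have hg0 : 0 ≤ g := hgdef ▸ matOpNorm_nonneg G
  set A := St + lam • Sv⁻¹ with hA
  have hAh : A.IsHermitian := by
    refine hSt.1.add ?_
    unfold Matrix.IsHermitian
    rw [Matrix.conjTranspose_smul, hSv.posSemidef.1.inv]
    simp
  have hm : 0 < l + lam / s := by positivity
  have hqA : ∀ x : EuclideanSpace ℝ (Fin d),
      (l + lam / s) * ‖x‖ ^ 2 ≤ ⟪x, Matrix.toEuclideanCLM (𝕜 := ℝ) A x⟫ := by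
    intro x
    have h1 := quad_lamMin St hSt l hlmin x
    have h2 := quad_inv Sv hSv x
    rw [hsdef] at h2
    have hq0 : 0 ≤ ⟪x, Matrix.toEuclideanCLM (𝕜 := ℝ) Sv⁻¹ x⟫ := by nlinarith [sq_nonneg ‖x‖]
    have h3 : (lam / s) * ‖x‖ ^ 2 ≤ lam * ⟪x, Matrix.toEuclideanCLM (𝕜 := ℝ) Sv⁻¹ x⟫ := by
      calc (lam / s) * ‖x‖ ^ 2 ≤ (lam / s) * (s * ⟪x, Matrix.toEuclideanCLM (𝕜 := ℝ) Sv⁻¹ x⟫) := by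
            apply mul_le_mul_of_nonneg_left h2 (by positivity)
        _ = lam * ⟪x, Matrix.toEuclideanCLM (𝕜 := ℝ) Sv⁻¹ x⟫ := by
            rw [← mul_assoc, div_mul_cancel₀ _ hs.ne']
    have hTA : ⟪x, Matrix.toEuclideanCLM (𝕜 := ℝ) A x⟫ =
        ⟪x, Matrix.toEuclideanCLM (𝕜 := ℝ) St x⟫ +
          lam * ⟪x, Matrix.toEuclideanCLM (𝕜 := ℝ) Sv⁻¹ x⟫ := by
      have happ : Matrix.toEuclideanCLM (𝕜 := ℝ) A x =
          Matrix.toEuclideanCLM (𝕜 := ℝ) St x +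
            lam • (Matrix.toEuclideanCLM (𝕜 := ℝ) Sv⁻¹ x) := by
        rw [hA, _root_.map_add, _root_.map_smul]
        rfl
      rw [happ, inner_add_right, real_inner_smul_right]
    rw [hTA, add_mul]
    linarith
  obtain ⟨hAunit, hAinv⟩ := coercive A hAh _ hm hqA
  have hmg : 0 < l + lam / s - g := by
    have : g ≤ (l + lam / s) / 2 := hGnorm
    linarith
  have hqAG : ∀ x : EuclideanSpace ℝ (Fin d),
      (l + lam / s - g) * ‖x‖ ^ 2 ≤ ⟪x, Matrix.toEuclideanCLM (𝕜 := ℝ) (A + G) x⟫ := by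
    intro x
    have h1 := hqA x
    have h2 := quad_abs_le G x
    rw [hgdef] at h2
    have hTAG : ⟪x, Matrix.toEuclideanCLM (𝕜 := ℝ) (A + G) x⟫ =
        ⟪x, Matrix.toEuclideanCLM (𝕜 := ℝ) A x⟫ +
          ⟪x, Matrix.toEuclideanCLM (𝕜 := ℝ) G x⟫ := by
      rw [_root_.map_add, ContinuousLinearMap.add_apply, inner_add_right]
    rw [hTAG, sub_mul]
    have := abs_le.mp h2
    have hGge : -(g * ‖x‖ ^ 2) ≤ ⟪x, Matrix.toEuclideanCLM (𝕜 := ℝ) G x⟫ := this.1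
    linarith
  obtain ⟨hAGunit, hAGinv⟩ := coercive (A + G) (hAh.add hG) _ hmg hqAG
  refine ⟨hAunit, hAGunit, ?_⟩
  have hdetA : IsUnit A.det := (Matrix.isUnit_iff_isUnit_det _).1 hAunit
  have hdetAG : IsUnit (A + G).det := (Matrix.isUnit_iff_isUnit_det _).1 hAGunit
  have hid : (A + G)⁻¹ - A⁻¹ = (A + G)⁻¹ * (-G * A⁻¹) := by
    have e1 : A * A⁻¹ = 1 := Matrix.mul_nonsing_inv _ hdetA
    have e2 : (A + G)⁻¹ * (A + G) = 1 := Matrix.nonsing_inv_mul _ hdetAG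
    calc (A + G)⁻¹ - A⁻¹ = (A + G)⁻¹ * (A * A⁻¹) - ((A + G)⁻¹ * (A + G)) * A⁻¹ := by
          rw [e1, e2, mul_one, one_mul]
      _ = (A + G)⁻¹ * (A * A⁻¹) - (A + G)⁻¹ * ((A + G) * A⁻¹) := by rw [mul_assoc]
      _ = (A + G)⁻¹ * (A * A⁻¹ - (A + G) * A⁻¹) := by rw [mul_sub]
      _ = (A + G)⁻¹ * ((A - (A + G)) * A⁻¹) := by rw [sub_mul]
      _ = (A + G)⁻¹ * (-G * A⁻¹) := by
          congr 2
          abel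
  rw [hid]
  have hb1 : matOpNorm ((A + G)⁻¹ * (-G * A⁻¹)) ≤
      (1 / (l + lam / s - g)) * (g * (1 / (l + lam / s))) := by
    calc matOpNorm ((A + G)⁻¹ * (-G * A⁻¹)) ≤
        matOpNorm (A + G)⁻¹ * matOpNorm (-G * A⁻¹) := matOpNorm_mul_le _ _
      _ ≤ matOpNorm (A + G)⁻¹ * (matOpNorm (-G) * matOpNorm A⁻¹) :=
          mul_le_mul_of_nonneg_left (matOpNorm_mul_le _ _) (matOpNorm_nonneg _)
      _ = matOpNorm (A + G)⁻¹ * (g * matOpNorm A⁻¹) := by rw [matOpNorm_neg, hgdef]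
      _ ≤ (1 / (l + lam / s - g)) * (g * (1 / (l + lam / s))) := by
          apply mul_le_mul hAGinv ?_ ?_ (by positivity)
          · exact mul_le_mul_of_nonneg_left hAinv hg0
          · exact mul_nonneg hg0 (matOpNorm_nonneg _)
  exact le_trans hb1 (arith_final l lam s g hl hlam hs hg0 hGnorm)
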